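/- One has f(1/8) = 1/288, f(3/8) = 73/288, f(5/8) = 215/288, and f(7/8) = 287/288. -/

import Mathlib

open scoped BigOperators
open intervalIntegral Set MeasureTheory

theorem fabius_stmt_15 (f : ℝ → ℝ)
    (hcont : ContinuousOn f (Set.Ici 0))
    (hsym : ∀ x : ℝ, 0 ≤ x → x ≤ 1 → f x + f (1 - x) = 1)
    (hint : ∀ x : ℝ, 0 ≤ x → f x = ∫ t in (0:ℝ)..(2 * x), f t) :
    f (1 / 8) = 1 / 288 ∧
      f (3 / 8) = 73 / 288 ∧
      f (5 / 8) = 215 / 288 ∧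
      f (7 / 8) = 287 / 288 := by
  have hf0 : f 0 = 0 := by simpa using hint 0 le_rfl
  set g : ℝ → ℝ := fun x => f (max x 0) with hg_def
  have hg : Continuous g :=
    hcont.comp_continuous (continuous_id.max continuous_const) (fun x => le_max_right x 0)
  have hge : ∀ x : ℝ, 0 ≤ x → g x = f x := fun x hx => by
    simp [hg_def, max_eq_left hx]
  have hgneg : ∀ x : ℝ, x ≤ 0 → g x = 0 := fun x hx => by
    simp [hg_def, max_eq_right hx, hf0]
  have ghint : ∀ x : ℝ, g x = ∫ t in (0:ℝ)..(2 * x), g t := by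
    intro x
    rcases le_or_gt 0 x with hx | hx
    · rw [hge x hx, hint x hx]
      refine intervalIntegral.integral_congr fun t ht => ?_
      rw [Set.uIcc_of_le (by linarith : (0:ℝ) ≤ 2*x)] at ht
      exact (hge t ht.1).symm
    · rw [hgneg x hx.le]
      have : EqOn g (fun _ => (0:ℝ)) (Set.uIcc 0 (2*x)) := by
        intro t ht
        rw [Set.uIcc_of_ge (by linarith : 2*x ≤ (0:ℝ))] at ht
        exact hgneg t ht.2
      rw [intervalIntegral.integral_congr this]
      simp
  set G : ℝ → ℝ := fun x => ∫ t in (0:ℝ)..x, g t with hG_def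
  have hGderiv : ∀ x : ℝ, HasDerivAt G (g x) x := fun x =>
    intervalIntegral.integral_hasDerivAt_right (hg.intervalIntegrable 0 x)
      hg.aestronglyMeasurable.stronglyMeasurableAtFilter hg.continuousAt
  have hGg : ∀ x : ℝ, G (2 * x) = g x := fun x => (ghint x).symm
  have hG : ∀ c : ℝ, G c = g (c / 2) := fun c => by
    have := hGg (c / 2); rwa [show 2 * (c/2) = c by ring] at this
  have gderiv : ∀ x : ℝ, HasDerivAt g (2 * g (2 * x)) x := by
    intro x
    have h0 : HasDerivAt (fun y : ℝ => 2 * y) 2 x := by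
      simpa using (hasDerivAt_id x).const_mul 2
    have h1 := (hGderiv (2 * x)).comp x h0
    have h2 : G ∘ (fun y : ℝ => 2 * y) = g := funext fun y => hGg y
    rw [h2] at h1
    simpa [mul_comm] using h1
  have gsym : ∀ x : ℝ, 0 ≤ x → x ≤ 1 → g x + g (1 - x) = 1 := by
    intro x h0 h1
    rw [hge x h0, hge (1-x) (by linarith)]
    exact hsym x h0 h1
  have hIoo : ∀ x ∈ Set.Ioo (0:ℝ) 1, g (2 * x) = g (2 - 2 * x) := by
    intro x hx
    have hd1 : HasDerivAt g (2 * g (2 * x)) x := gderiv x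
    have hd2 : HasDerivAt (fun y : ℝ => 1 - g (1 - y)) (2 * g (2 - 2 * x)) x := by
      have hc : HasDerivAt (fun y : ℝ => 1 - y) (-1) x := by
        simpa using (hasDerivAt_id x).const_sub 1
      have h := (gderiv (1 - x)).comp x hc
      have h2 := h.const_sub 1
      have : -(2 * g (2 * (1 - x)) * -1) = 2 * g (2 - 2 * x) := by ring_nf
      rw [this] at h2
      exact h2
    have heq : g =ᶠ[nhds x] (fun y : ℝ => 1 - g (1 - y)) := by
      filter_upwards [Ioo_mem_nhds hx.1 hx.2] with y hy
      have := gsym y hy.1.le hy.2.le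
      show g y = 1 - g (1 - y)
      linarith
    have hd1' : HasDerivAt g (2 * g (2 - 2 * x)) x := hd2.congr_of_eventuallyEq heq
    have huniq := hd1.unique hd1'
    linarith
  have key : Set.EqOn g (fun y : ℝ => g (2 - y)) (Set.Icc 0 2) := by
    have hIoo' : Set.EqOn g (fun y : ℝ => g (2 - y)) (Set.Ioo 0 2) := by
      intro y hy
      have hx : y / 2 ∈ Set.Ioo (0:ℝ) 1 := ⟨by linarith [hy.1], by linarith [hy.2]⟩
      have := hIoo (y/2) hx
      rw [show 2 * (y/2) = y by ring] at this
      simpa using this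
    have := hIoo'.closure hg (hg.comp (continuous_const.sub continuous_id))
    rwa [closure_Ioo (by norm_num : (0:ℝ) ≠ 2)] at this
  have key' : ∀ y ∈ Set.Icc (0:ℝ) 2, g y = g (2 - y) := fun y hy => key hy
  -- basic values
  have g0 : g 0 = 0 := hgneg 0 le_rfl
  have ghalf : g (1/2) = 1/2 := by
    have h := gsym (1/2) (by norm_num) (by norm_num)
    norm_num at h
    linarith
  have g1 : g 1 = 1 := by
    have h := gsym 0 le_rfl zero_le_one
    rw [g0] at h
    norm_num at h
    exact h
  have hGcont : Continuous G := by
    rw [continuous_iff_continuousAt]; exact fun x => (hGderiv x).continuousAt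
  have hxg : Continuous fun y : ℝ => y * g y := continuous_id.mul hg
  have hx2g : Continuous fun y : ℝ => y^2 * g y := (continuous_pow 2).mul hg
  have hseg : ∀ c b : ℝ, ∫ x in c..b, g x = G b - G c := fun c b =>
    (intervalIntegral.integral_interval_sub_left (hg.intervalIntegrable 0 b)
      (hg.intervalIntegrable 0 c)).symm
  have G1 : G 1 = 1/2 := by rw [hG 1]; norm_num [ghalf]
  have G2 : G 2 = 1 := by rw [hG 2]; norm_num [g1]
  have Ghalf : G (1/2) = g (1/4) := by rw [hG (1/2)]; norm_num
  have Gquarter : G (1/4) = g (1/8) := by rw [hG (1/4)]; norm_num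
  -- integration by parts instances
  have hpart1 : ∀ b : ℝ, ∫ x in (0:ℝ)..b, x * g x
      = b * G b - ∫ x in (0:ℝ)..b, G x := by
    intro b
    have h := intervalIntegral.integral_mul_deriv_eq_deriv_mul
      (u := fun x : ℝ => x) (u' := fun _ => (1:ℝ)) (v := G) (v' := g)
      (fun x _ => hasDerivAt_id x) (fun x _ => hGderiv x)
      (continuous_const.intervalIntegrable 0 b) (hg.intervalIntegrable 0 b)
    simpa using h
  have hpart2 : ∀ b : ℝ, ∫ x in (0:ℝ)..b, x^2 * g x
      = b^2 * G b - 2 * ∫ x in (0:ℝ)..b, x * G x := by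
    intro b
    have h := intervalIntegral.integral_mul_deriv_eq_deriv_mul
      (u := fun x : ℝ => x^2) (u' := fun x => 2*x) (v := G) (v' := g)
      (fun x _ => by simpa using hasDerivAt_pow 2 x) (fun x _ => hGderiv x)
      ((continuous_const.mul continuous_id).intervalIntegrable 0 b)
      (hg.intervalIntegrable 0 b)
    rw [h, show ∫ x in (0:ℝ)..b, (2*x) * G x = 2 * ∫ x in (0:ℝ)..b, x * G x from by
      rw [← intervalIntegral.integral_const_mul]
      exact intervalIntegral.integral_congr fun x _ => by ring]
    ring
  have hintG : ∀ b : ℝ, ∫ x in (0:ℝ)..b, G x = 2 * G (b/2) := by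
    intro b
    have h1 : ∫ x in (0:ℝ)..b, G x = ∫ x in (0:ℝ)..b, g (x/2) :=
      intervalIntegral.integral_congr fun x _ => hG x
    rw [h1, intervalIntegral.integral_comp_div g (two_ne_zero)]
    norm_num [smul_eq_mul]
    simp [hG_def]
  have hintxG : ∀ b : ℝ, ∫ x in (0:ℝ)..b, x * G x = 4 * ∫ u in (0:ℝ)..(b/2), u * g u := by
    intro b
    have h1 : ∫ x in (0:ℝ)..b, x * G x
        = ∫ x in (0:ℝ)..b, (fun u : ℝ => 2 * (u * g u)) (x/2) := by
      refine intervalIntegral.integral_congr fun x _ => ?_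
      simp only
      rw [hG x]; ring
    rw [h1, intervalIntegral.integral_comp_div (fun u : ℝ => 2 * (u * g u)) (two_ne_zero),
      intervalIntegral.integral_const_mul]
    norm_num [smul_eq_mul]
    ring
  have hM1 : ∫ x in (0:ℝ)..1, x * g x = 1/2 - 2 * g (1/4) := by
    rw [hpart1 1, hintG 1, G1]
    norm_num [Ghalf]
  have hK : ∫ x in (0:ℝ)..(1/2), x * g x = g (1/4) / 2 - 2 * g (1/8) := by
    rw [hpart1 (1/2), hintG (1/2)]
    norm_num [Ghalf, Gquarter]
    ring
  have hM2 : ∫ x in (0:ℝ)..1, x^2 * g x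
      = 1/2 - 8 * (∫ x in (0:ℝ)..(1/2), x * g x) := by
    rw [hpart2 1, hintxG 1, G1]
    norm_num
    ring
  have hN2 : ∫ x in (0:ℝ)..2, x^2 * g x
      = 4 - 8 * (∫ x in (0:ℝ)..1, x * g x) := by
    rw [hpart2 2, hintxG 2, G2]
    norm_num
    ring
  -- reflection on [0,1]
  have hR1 : (1:ℝ)/2 - 2 * (∫ x in (0:ℝ)..1, x * g x) + (∫ x in (0:ℝ)..1, x^2 * g x)
      = 1/3 - (∫ x in (0:ℝ)..1, x^2 * g x) := by
    have e1 : ∫ x in (0:ℝ)..1, x^2 * g (1-x) = ∫ x in (0:ℝ)..1, (1-x)^2 * g x := by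
      have h2 := intervalIntegral.integral_comp_sub_left (fun y : ℝ => (1-y)^2 * g y) 1
        (a := (0:ℝ)) (b := (1:ℝ))
      norm_num at h2
      rw [← h2]
    have e2 : ∫ x in (0:ℝ)..1, x^2 * g (1-x) = ∫ x in (0:ℝ)..1, (x^2 - x^2 * g x) := by
      refine intervalIntegral.integral_congr fun x hx => ?_
      rw [Set.uIcc_of_le zero_le_one] at hx
      have h3 := gsym x hx.1 hx.2
      have h4 : g (1-x) = 1 - g x := by linarith
      rw [h4]; ring
    have e3 : ∫ x in (0:ℝ)..1, (1-x)^2 * g x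
        = (∫ x in (0:ℝ)..1, g x) - 2 * (∫ x in (0:ℝ)..1, x * g x)
          + (∫ x in (0:ℝ)..1, x^2 * g x) := by
      have hfe : (fun x : ℝ => (1-x)^2 * g x)
          = fun x : ℝ => (g x - 2 * (x * g x)) + x^2 * g x := by
        funext x; ring
      rw [hfe, intervalIntegral.integral_add (f := fun x : ℝ => g x - 2 * (x * g x))
          ((hg.sub (continuous_const.mul hxg)).intervalIntegrable 0 1)
          (hx2g.intervalIntegrable 0 1),
        intervalIntegral.integral_sub (g := fun x : ℝ => 2 * (x * g x)) (hg.intervalIntegrable 0 1)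
          ((continuous_const.mul hxg).intervalIntegrable 0 1),
        intervalIntegral.integral_const_mul]
    have e4 : ∫ x in (0:ℝ)..1, (x^2 - x^2 * g x) = 1/3 - (∫ x in (0:ℝ)..1, x^2 * g x) := by
      rw [intervalIntegral.integral_sub ((continuous_pow 2).intervalIntegrable 0 1)
          (hx2g.intervalIntegrable 0 1), integral_pow]
      norm_num
    have e5 : ∫ x in (0:ℝ)..1, g x = 1/2 := by rw [hseg 0 1, G1]; simp [hG_def]
    rw [← e5, ← e3, ← e1, e2, e4]

  -- reflection on [1,2]
  have hR2 : (∫ x in (0:ℝ)..2, x^2 * g x)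
      = (∫ x in (0:ℝ)..1, x^2 * g x) + (4 * (1/2) - 4 * (∫ x in (0:ℝ)..1, x * g x)
        + (∫ x in (0:ℝ)..1, x^2 * g x)) := by
    have hsplit : (∫ x in (0:ℝ)..1, x^2 * g x) + (∫ x in (1:ℝ)..2, x^2 * g x)
        = ∫ x in (0:ℝ)..2, x^2 * g x :=
      intervalIntegral.integral_add_adjacent_intervals (hx2g.intervalIntegrable 0 1)
        (hx2g.intervalIntegrable 1 2)
    have h1 : ∫ x in (1:ℝ)..2, x^2 * g x = ∫ x in (1:ℝ)..2, x^2 * g (2-x) := by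
      refine intervalIntegral.integral_congr fun x hx => ?_
      rw [Set.uIcc_of_le one_le_two] at hx
      rw [key' x ⟨by linarith [hx.1], hx.2⟩]
    have h2 := intervalIntegral.integral_comp_sub_left (fun y : ℝ => (2-y)^2 * g y) 2
      (a := (1:ℝ)) (b := (2:ℝ))
    norm_num at h2
    have e3 : ∫ x in (0:ℝ)..1, (2-x)^2 * g x
        = (4 * (∫ x in (0:ℝ)..1, g x) - 4 * (∫ x in (0:ℝ)..1, x * g x))
          + (∫ x in (0:ℝ)..1, x^2 * g x) := by
      have hfe : (fun x : ℝ => (2-x)^2 * g x)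
          = fun x : ℝ => (4 * g x - 4 * (x * g x)) + x^2 * g x := by
        funext x; ring
      rw [hfe, intervalIntegral.integral_add (f := fun x : ℝ => 4 * g x - 4 * (x * g x))
          (((continuous_const.mul hg).sub (continuous_const.mul hxg)).intervalIntegrable 0 1)
          (hx2g.intervalIntegrable 0 1),
        intervalIntegral.integral_sub (f := fun x : ℝ => 4 * g x) (g := fun x : ℝ => 4 * (x * g x))
          ((continuous_const.mul hg).intervalIntegrable 0 1)
          ((continuous_const.mul hxg).intervalIntegrable 0 1),
        intervalIntegral.integral_const_mul, intervalIntegral.integral_const_mul]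
    have e5 : ∫ x in (0:ℝ)..1, g x = 1/2 := by rw [hseg 0 1, G1]; simp [hG_def]
    rw [← hsplit, h1, h2, e3, e5]
  -- solve the linear system
  have hb : g (1/8) = 1/288 := by linarith [hM1, hK, hM2, hN2, hR1, hR2]
  have ha : g (1/4) = 5/72 := by linarith [hM1, hK, hM2, hN2, hR1, hR2]
  -- value at 3/8
  have h38 : g (3/8) = 73/288 := by
    have h0 : g (3/8) = G (3/4) := by rw [hG (3/4)]; norm_num
    have h1 : G (3/4) = G (1/2) + ∫ x in (1/2:ℝ)..(3/4), g x := by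
      rw [hseg (1/2) (3/4)]; ring
    have ha2 : ∫ x in (1/2:ℝ)..(3/4), g x = ∫ x in (1/2:ℝ)..(3/4), (1 - g (1-x)) := by
      refine intervalIntegral.integral_congr fun x hx => ?_
      rw [Set.uIcc_of_le (by norm_num : (1/2:ℝ) ≤ 3/4)] at hx
      have h3 := gsym x (by linarith [hx.1]) (by linarith [hx.2])
      linarith
    have hc2 : ∫ x in (1/2:ℝ)..(3/4), (1 - g (1-x))
        = 1/4 - ∫ x in (1/4:ℝ)..(1/2), g x := by
      rw [intervalIntegral.integral_sub (intervalIntegrable_const)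
        ((show Continuous fun x : ℝ => g (1 - x) from
          hg.comp (continuous_const.sub continuous_id)).intervalIntegrable _ _)]
      norm_num
    rw [h0, h1, ha2, hc2, hseg (1/4) (1/2), Ghalf, Gquarter, ha, hb]
    norm_num
  have hf18 : f (1/8) = 1/288 := by rw [← hge (1/8) (by norm_num)]; exact hb
  have hf38 : f (3/8) = 73/288 := by rw [← hge (3/8) (by norm_num)]; exact h38
  have hf58 : f (5/8) = 215/288 := by
    have h := hsym (3/8) (by norm_num) (by norm_num)
    norm_num at h
    linarith
  have hf78 : f (7/8) = 287/288 := by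
    have h := hsym (1/8) (by norm_num) (by norm_num)
    norm_num at h
    linarith
  exact ⟨hf18, hf38, hf58, hf78⟩
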